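/- arXiv:1712.00631 — 2 statements merged into one kernel-verified Lean document; each statement's English description precedes it below -/
import Mathlib

section
/- For every choice of reward parameters R_1, R_2 ∈ ℝ and every unit cost Λ ≥ 0, the link formation game has at least one pure-strategy Nash equilibrium; that is, there exists a profile (a_1*, a_2*) ∈ {0,1}² such that u_1(a_1*, a_2*) ≥ u_1(a_1, a_2*) for all a_1 ∈ {0,1} and u_2(a_2*, a_1*) ≥ u_2(a_2, a_1*) for all a_2 ∈ {0,1}. (Paper's Theorem 3: the distributed topology-design algorithm is guaranteed to determine at least one stable topology.) -/
/-- Utility of a player in the link formation game: `u R Λ a b = a·R − Λ·a/(a+b)`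
(in Lean, `0/0 = 0`, matching the paper's convention). -/
noncomputable def linkUtil (R Λ a b : ℝ) : ℝ := a * R - Λ * a / (a + b)

/-- `(a1, a2)` is a pure-strategy Nash equilibrium of the link formation game
with rewards `R1, R2` and unit cost `Λ`. -/
def IsLinkNE (R1 R2 Λ a1 a2 : ℝ) : Prop :=
  a1 ∈ ({0, 1} : Set ℝ) ∧ a2 ∈ ({0, 1} : Set ℝ) ∧
  (∀ a ∈ ({0, 1} : Set ℝ), linkUtil R1 Λ a a2 ≤ linkUtil R1 Λ a1 a2) ∧
  (∀ a ∈ ({0, 1} : Set ℝ), linkUtil R2 Λ a a1 ≤ linkUtil R2 Λ a2 a1)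

/-- Paper's Theorem 3. For every `R1 R2 : ℝ` and `Λ ≥ 0`,
the link formation game has at least one pure-strategy Nash equilibrium. -/
theorem link_formation_game_has_pure_NE (R1 R2 Λ : ℝ) (hΛ : 0 ≤ Λ) :
    ∃ a1 a2 : ℝ, IsLinkNE R1 R2 Λ a1 a2 := by
  by_cases h1 : Λ/2 ≤ R1 <;> by_cases h2 : Λ/2 ≤ R2
  · exact ⟨1, 1, Or.inr rfl, Or.inr rfl,
      fun a ha => by rcases ha with h | h <;> subst h <;> simp [linkUtil] <;> linarith,
      fun a ha => by rcases ha with h | h <;> subst h <;> simp [linkUtil] <;> linarith⟩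
  · by_cases h3 : Λ ≤ R1
    · exact ⟨1, 0, Or.inr rfl, Or.inl rfl,
        fun a ha => by rcases ha with h | h <;> subst h <;> simp [linkUtil] <;> linarith,
        fun a ha => by rcases ha with h | h <;> subst h <;> simp [linkUtil] <;> linarith⟩
    · exact ⟨0, 0, Or.inl rfl, Or.inl rfl,
        fun a ha => by rcases ha with h | h <;> subst h <;> simp [linkUtil] <;> linarith,
        fun a ha => by rcases ha with h | h <;> subst h <;> simp [linkUtil] <;> linarith⟩
  · by_cases h3 : Λ ≤ R2
    · exact ⟨0, 1, Or.inl rfl, Or.inr rfl,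
        fun a ha => by rcases ha with h | h <;> subst h <;> simp [linkUtil] <;> linarith,
        fun a ha => by rcases ha with h | h <;> subst h <;> simp [linkUtil] <;> linarith⟩
    · exact ⟨0, 0, Or.inl rfl, Or.inl rfl,
        fun a ha => by rcases ha with h | h <;> subst h <;> simp [linkUtil] <;> linarith,
        fun a ha => by rcases ha with h | h <;> subst h <;> simp [linkUtil] <;> linarith⟩
  · exact ⟨0, 0, Or.inl rfl, Or.inl rfl,
      fun a ha => by rcases ha with h | h <;> subst h <;> simp [linkUtil] <;> linarith,
      fun a ha => by rcases ha with h | h <;> subst h <;> simp [linkUtil] <;> linarith⟩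
end

section
/- Fix R_1, R_2 ∈ ℝ and Λ ≥ 0. Define the best-response map BR_i(a_j) = 1 if R_i ≥ Λ/(1 + a_j) and BR_i(a_j) = 0 otherwise, for a_j ∈ {0,1}, and let T(a_1, a_2) = (BR_1(a_2), BR_2(a_1)). Then: (i) T is monotone with respect to the componentwise order on {0,1}²; (ii) the iteration starting from (0,0) is componentwise nondecreasing; and (iii) T²(0,0) is a fixed point of T and is a pure-strategy Nash equilibrium of the link formation game. (This establishes that the best-response while-loop in the paper's Algorithm 1 terminates at a stable link configuration.) -/
/-- Best response of a player with reward `R` against opponent action `b`: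
build the link (`1`) iff `R ≥ Λ/(1 + b)`. -/
noncomputable def BR (R Λ b : ℝ) : ℝ := if Λ / (1 + b) ≤ R then 1 else 0

/-- Joint best-response map `T(a1, a2) = (BR₁(a2), BR₂(a1))`. -/
noncomputable def brMap (R1 R2 Λ : ℝ) (p : ℝ × ℝ) : ℝ × ℝ :=
  (BR R1 Λ p.2, BR R2 Λ p.1)

lemma BR_mem (R Λ b : ℝ) : BR R Λ b ∈ ({0, 1} : Set ℝ) := by
  unfold BR; split_ifs <;> simp

lemma BR_nonneg (R Λ b : ℝ) : 0 ≤ BR R Λ b := by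
  unfold BR; split_ifs <;> norm_num

lemma BR_mono (R Λ : ℝ) (hΛ : 0 ≤ Λ) {b b' : ℝ}
    (hb : b ∈ ({0, 1} : Set ℝ)) (hb' : b' ∈ ({0, 1} : Set ℝ)) (h : b ≤ b') :
    BR R Λ b ≤ BR R Λ b' := by
  unfold BR
  rcases hb with rfl | rfl <;> rcases hb' with rfl | rfl <;>
    split_ifs with h1 h2 <;> norm_num at * <;> linarith

lemma BR_best (R Λ : ℝ) (hΛ : 0 ≤ Λ) {b : ℝ} (hb : b ∈ ({0, 1} : Set ℝ)) :
    ∀ a ∈ ({0, 1} : Set ℝ), linkUtil R Λ a b ≤ linkUtil R Λ (BR R Λ b) b := by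
  intro a ha
  unfold BR linkUtil
  rcases hb with rfl | rfl <;> rcases ha with rfl | rfl <;>
    split_ifs with h <;> (try push_neg at *) <;> norm_num at * <;> linarith

lemma brMap_fix (R1 R2 Λ : ℝ) (hΛ : 0 ≤ Λ) :
    brMap R1 R2 Λ ((brMap R1 R2 Λ)^[2] (0, 0)) = (brMap R1 R2 Λ)^[2] (0, 0) := by
  have half : ∀ R : ℝ, Λ ≤ R → Λ / 2 ≤ R := fun R h => le_trans (by linarith) h
  simp only [Function.iterate_succ, Function.iterate_zero, Function.comp_apply, id_eq]
  by_cases h1 : Λ ≤ R1 <;> by_cases h2 : Λ ≤ R2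
  · simp [brMap, BR, one_add_one_eq_two, h1, h2, half _ h1, half _ h2]
  · by_cases d2 : Λ / 2 ≤ R2
    · simp [brMap, BR, h1, h2, one_add_one_eq_two, half _ h1, d2]
    · simp [brMap, BR, h1, h2, one_add_one_eq_two, half _ h1, d2]
  · by_cases d1 : Λ / 2 ≤ R1
    · simp [brMap, BR, h1, h2, one_add_one_eq_two, half _ h2, d1]
    · simp [brMap, BR, h1, h2, one_add_one_eq_two, half _ h2, d1]
  · simp [brMap, BR, h1, h2]


/-- The best-response map `T` of the link formation game is
(i) monotone on `{0,1}²` w.r.t. the componentwise order, (ii) its iteration from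
`(0,0)` is componentwise nondecreasing, and (iii) `T²(0,0)` is a fixed point of `T`
and a pure-strategy Nash equilibrium; hence Algorithm 1's best-response loop
terminates at a stable link configuration. -/
theorem best_response_iteration (R1 R2 Λ : ℝ) (hΛ : 0 ≤ Λ) :
    (∀ p q : ℝ × ℝ, p.1 ∈ ({0, 1} : Set ℝ) → p.2 ∈ ({0, 1} : Set ℝ) →
      q.1 ∈ ({0, 1} : Set ℝ) → q.2 ∈ ({0, 1} : Set ℝ) →
      p.1 ≤ q.1 → p.2 ≤ q.2 →
      (brMap R1 R2 Λ p).1 ≤ (brMap R1 R2 Λ q).1 ∧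
      (brMap R1 R2 Λ p).2 ≤ (brMap R1 R2 Λ q).2) ∧
    (∀ n : ℕ,
      ((brMap R1 R2 Λ)^[n] (0, 0)).1 ≤ ((brMap R1 R2 Λ)^[n + 1] (0, 0)).1 ∧
      ((brMap R1 R2 Λ)^[n] (0, 0)).2 ≤ ((brMap R1 R2 Λ)^[n + 1] (0, 0)).2) ∧
    (brMap R1 R2 Λ ((brMap R1 R2 Λ)^[2] (0, 0)) = (brMap R1 R2 Λ)^[2] (0, 0) ∧
      IsLinkNE R1 R2 Λ ((brMap R1 R2 Λ)^[2] (0, 0)).1 ((brMap R1 R2 Λ)^[2] (0, 0)).2) := by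

  have mono : ∀ p q : ℝ × ℝ, p.1 ∈ ({0, 1} : Set ℝ) → p.2 ∈ ({0, 1} : Set ℝ) →
      q.1 ∈ ({0, 1} : Set ℝ) → q.2 ∈ ({0, 1} : Set ℝ) →
      p.1 ≤ q.1 → p.2 ≤ q.2 →
      (brMap R1 R2 Λ p).1 ≤ (brMap R1 R2 Λ q).1 ∧
      (brMap R1 R2 Λ p).2 ≤ (brMap R1 R2 Λ q).2 := by
    intro p q hp1 hp2 hq1 hq2 h1 h2
    exact ⟨BR_mono R1 Λ hΛ hp2 hq2 h2, BR_mono R2 Λ hΛ hp1 hq1 h1⟩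
  have hmem : ∀ n : ℕ, ((brMap R1 R2 Λ)^[n] (0, 0)).1 ∈ ({0, 1} : Set ℝ) ∧
      ((brMap R1 R2 Λ)^[n] (0, 0)).2 ∈ ({0, 1} : Set ℝ) := by
    intro n
    cases n with
    | zero => simp
    | succ m =>
      rw [Function.iterate_succ_apply']
      exact ⟨BR_mem _ _ _, BR_mem _ _ _⟩
  have incr : ∀ n : ℕ,
      ((brMap R1 R2 Λ)^[n] (0, 0)).1 ≤ ((brMap R1 R2 Λ)^[n + 1] (0, 0)).1 ∧
      ((brMap R1 R2 Λ)^[n] (0, 0)).2 ≤ ((brMap R1 R2 Λ)^[n + 1] (0, 0)).2 := by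
    intro n
    induction n with
    | zero =>
      simp only [Function.iterate_one, Function.iterate_zero, id_eq]
      exact ⟨BR_nonneg _ _ _, BR_nonneg _ _ _⟩
    | succ m ih =>
      rw [Function.iterate_succ_apply', Function.iterate_succ_apply']
      exact mono _ _ (hmem m).1 (hmem m).2 (hmem (m + 1)).1 (hmem (m + 1)).2 ih.1 ih.2
  have hfix := brMap_fix R1 R2 Λ hΛ
  refine ⟨mono, incr, hfix, ?_⟩
  set x := (brMap R1 R2 Λ)^[2] (0, 0) with hx
  have hx1 : x.1 = BR R1 Λ x.2 := congrArg Prod.fst hfix.symm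
  have hx2 : x.2 = BR R2 Λ x.1 := congrArg Prod.snd hfix.symm
  refine ⟨(hmem 2).1, (hmem 2).2, ?_, ?_⟩
  · rw [hx1]; exact BR_best R1 Λ hΛ (hmem 2).2
  · rw [hx2]; exact BR_best R2 Λ hΛ (hmem 2).1
end
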